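/- Suppose the family Υ_n is admissible relative to the sets Ω(n,m) for G ↷ (X,ν), and let G ↷ (K,κ) be a measure-preserving action on a compact metric probability space satisfying 1/3 ≤ κ(B(x,ε))/κ(B(y,ε)) ≤ 3 for all ε > 0 and x,y ∈ K. For each n ≥ 1 and g ∈ G choose 0 < ρ(n,g) < 1/n with d_K(x,y) ≤ ρ(n,g) implying d_K(g⁻¹x,g⁻¹y) ≤ 1/n, and set Υ'_n(g,b,k,b',k') = 1_{B(k,ρ(n,g))}(k') Υ_n(g,b,b') / κ(B(k,ρ(n,g))). Then for every measurable E ⊆ ℝ and all n, m: Σ_{g∈G} ∫∫ 1_E(R(g⁻¹,b',k') − R(g⁻¹,b,k)) 1_{Ω(n,m)×K}(b,k) Υ'_n(g,b,k,b',k') d(ν×κ)(b',k') d(ν×κ)(b,k) = ζ_{n,m}(E), where R(g,b,k) = log (d((ν×κ)∘g)/d(ν×κ))(b,k); that is, the measure ζ'_{n,m} associated to the product family equals ζ_{n,m}. -/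

import Mathlib

open MeasureTheory Filter Metric Set
open scoped ENNReal

namespace StableRatio

variable {G : Type*} [Group G] [Countable G]

/-- The Radon–Nikodym derivative `d(ν∘g)/dν`, where `(ν∘g)(A) = ν(gA)`,
so that `ν∘g` is the pushforward of `ν` under the action of `g⁻¹`. -/
noncomputable def RN {Z : Type*} [MeasurableSpace Z] (act : G → Z → Z) (ν : Measure Z)
    (g : G) (z : Z) : ℝ :=
  ((ν.map (act g⁻¹)).rnDeriv ν z).toReal

/-- `R(g,η) = log (d(ν∘g)/dν)(η)`. -/
noncomputable def Rlog {Z : Type*} [MeasurableSpace Z] (act : G → Z → Z) (ν : Measure Z)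
    (g : G) (z : Z) : ℝ :=
  Real.log (RN act ν g z)

/-- A family of functions `Υ n : G → Z → Z → ℝ` is admissible relative to a family of
closed subsets `Ω n m ⊆ Z`, with constants `D C : ℕ → ℝ`, `N : ℕ → ℕ` and moduli
`fbd : ℕ → ℕ → ℝ`.  Here `dZ` is the metric on `Z` and `act` the (quasi-invariant)
action of `G` on `(Z,ν)`. -/
structure IsRelAdmissible {Z : Type*} [MeasurableSpace Z] [TopologicalSpace Z]
    (act : G → Z → Z) (dZ : Z → Z → ℝ) (ν : Measure Z) [SFinite ν]
    (Υ : ℕ → G → Z → Z → ℝ) (Ω : ℕ → ℕ → Set Z)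
    (D C : ℕ → ℝ) (N : ℕ → ℕ) (fbd : ℕ → ℕ → ℝ) : Prop where
  meas_Υ : ∀ (n : ℕ) (g : G), Measurable (Function.uncurry (Υ n g))
  nonneg_Υ : ∀ (n : ℕ) (g : G) (b b' : Z), 0 ≤ Υ n g b b'
  closed_Ω : ∀ n m : ℕ, IsClosed (Ω n m)
  D_pos : ∀ m : ℕ, 0 < D m
  D_lim : Tendsto D atTop (nhds 0)
  Ω_big : ∀ n m : ℕ, ENNReal.ofReal (1 - D m) < ν (Ω n m)
  f_lim : ∀ m : ℕ, Tendsto (fbd m) atTop (nhds 0)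
  close : ∀ (n m : ℕ) (g : G) (b b' : Z), b ∈ Ω n m → 0 < Υ n g b b' →
    dZ b b' < fbd m n ∧ dZ (act g⁻¹ b) (act g⁻¹ b') < fbd m n
  C_pos : ∀ m : ℕ, 0 < C m
  N_pos : ∀ m : ℕ, 0 < N m
  R_bound : ∀ (m n : ℕ), N m < n → ∀ g : G, ∀ᵐ p ∂(ν.prod ν),
    p.1 ∈ Ω n m → 0 < Υ n g p.1 p.2 →
      (|Rlog act ν g⁻¹ p.1| + |Rlog act ν g⁻¹ p.2| < C m ∧
        1 / C m ≤ |Rlog act ν g⁻¹ p.1 - Rlog act ν g⁻¹ p.2|)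
  normalized : ∀ (n : ℕ) (b : Z),
    (∑' g : G, ∫⁻ b', ENNReal.ofReal (Υ n g b b') ∂ν) = 1
  bdd₁ : ∀ (m n : ℕ), N m < n → ∀ᵐ b' ∂ν,
    (∫⁻ b in Ω n m, ∑' g : G, ENNReal.ofReal (Υ n g b b') ∂ν) ≤ ENNReal.ofReal (C m)
  bdd₂ : ∀ (m n : ℕ), N m < n → ∀ᵐ b' ∂ν,
    (∫⁻ b in Ω n m, ∑' g : G, ENNReal.ofReal (Υ n g b (act g b') * RN act ν g b') ∂ν)
      ≤ ENNReal.ofReal (C m)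
  bdd₃ : ∀ (m n : ℕ), N m < n → ∀ᵐ b ∂ν,
    (∫⁻ b', ∑' g : G, Set.indicator (Ω n m) (fun _ => (1 : ℝ≥0∞)) (act g b)
        * ENNReal.ofReal (Υ n g (act g b) b' * RN act ν g b') ∂ν) ≤ ENNReal.ofReal (C m)

/-- The measure `θ` on `ℝ` with `dθ = (1/2) e^{-|t|} dt`. -/
noncomputable def theta : Measure ℝ :=
  MeasureTheory.volume.withDensity (fun t : ℝ => ENNReal.ofReal ((1 / 2) * Real.exp (-|t|)))

instance : SFinite theta := by unfold theta; infer_instance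

/-- The measure `ζ_{n,m}` on `ℝ`:
`ζ_{n,m}(E) = Σ_{g∈G} ∫∫ 1_E(R(g⁻¹,b') − R(g⁻¹,b)) 1_{Ω(n,m)}(b) Υ_n(g,b,b') dν(b) dν(b')`. -/
noncomputable def zeta {Z : Type*} [MeasurableSpace Z] (act : G → Z → Z) (ν : Measure Z)
    [SFinite ν] (Υ : ℕ → G → Z → Z → ℝ) (Ω : ℕ → ℕ → Set Z) (n m : ℕ) : Measure ℝ :=
  Measure.sum fun g : G =>
    ((ν.prod ν).withDensity fun p =>
        Set.indicator (Ω n m) (fun _ => (1 : ℝ≥0∞)) p.1 * ENNReal.ofReal (Υ n g p.1 p.2)).map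
      fun p => Rlog act ν g⁻¹ p.2 - Rlog act ν g⁻¹ p.1

/-- The measure `ζ_{n,b}` on `ℝ`:
`ζ_{n,b}(E) = Σ_{g∈G} ∫ 1_E(R(g⁻¹,b') − R(g⁻¹,b)) Υ_n(g,b,b') dν(b')`. -/
noncomputable def zetaB {Z : Type*} [MeasurableSpace Z] (act : G → Z → Z) (ν : Measure Z)
    (Υ : ℕ → G → Z → Z → ℝ) (n : ℕ) (b : Z) : Measure ℝ :=
  Measure.sum fun g : G =>
    (ν.withDensity fun b' => ENNReal.ofReal (Υ n g b b')).map
      fun b' => Rlog act ν g⁻¹ b' - Rlog act ν g⁻¹ b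

/-- `μ` is a weak-* limit point of the sequence `μs`, i.e. the limit of some subsequence
in the weak-* topology (integration against bounded continuous functions). -/
def WeakStarLimitPoint (μs : ℕ → Measure ℝ) (μ : Measure ℝ) : Prop :=
  ∃ φ : ℕ → ℕ, StrictMono φ ∧
    ∀ f : BoundedContinuousFunction ℝ ℝ,
      Tendsto (fun k => ∫ x, f x ∂(μs (φ k))) atTop (nhds (∫ x, f x ∂μ))

/-- `T` belongs to the (topological) support of the measure `μ` on `ℝ`. -/
def MemSupport (μ : Measure ℝ) (T : ℝ) : Prop :=
  ∀ ε : ℝ, 0 < ε → 0 < μ (Metric.ball T ε)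

/-- `r` belongs to the ratio set of the action `act` of `G` on `(Z,μ)`. -/
def InRatioSet {Z : Type*} [MeasurableSpace Z] (act : G → Z → Z) (μ : Measure Z)
    (r : ℝ) : Prop :=
  ∀ A : Set Z, MeasurableSet A → 0 < μ A → ∀ ε : ℝ, 0 < ε →
    ∃ A' : Set Z, MeasurableSet A' ∧ A' ⊆ A ∧ 0 < μ A' ∧
      ∃ g : G, g ≠ 1 ∧ act g '' A' ⊆ A ∧ ∀ b ∈ A', |RN act μ g b - r| ≤ ε

/-- `r` belongs to the stable ratio set of the action `act` of `G` on `(Z,ν)`: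
`r` is in the ratio set of the product of the action with every probability
measure preserving action of `G`. -/
def InStableRatioSet {Z : Type*} [MeasurableSpace Z] (act : G → Z → Z) (ν : Measure Z)
    [SFinite ν] (r : ℝ) : Prop :=
  ∀ (Y : Type) [MeasurableSpace Y] (κ : Measure Y) [IsProbabilityMeasure κ]
    (aY : G → Y → Y),
    (∀ g : G, Measurable (aY g)) → aY 1 = id →
    (∀ g h : G, aY (g * h) = aY g ∘ aY h) →
    (∀ g : G, κ.map (aY g) = κ) →
    InRatioSet (fun g (p : Z × Y) => (act g p.1, aY g p.2)) (ν.prod κ) r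

/-- The operator `W_{n,m}`. -/
noncomputable def Wop {Z : Type*} [MeasurableSpace Z] (ν : Measure Z)
    (Υ : ℕ → G → Z → Z → ℝ) (Ω : ℕ → ℕ → Set Z) (n m : ℕ)
    (f : Z → ℝ → ℝ) (b : Z) (t : ℝ) : ℝ :=
  ∑' g : G, ∫ b', Set.indicator (Ω n m) (fun _ => (1 : ℝ)) b * Υ n g b b' * f b' t ∂ν

/-- The operator `X_{n,m}`. -/
noncomputable def Xop {Z : Type*} [MeasurableSpace Z] (act : G → Z → Z) (ν : Measure Z)
    (Υ : ℕ → G → Z → Z → ℝ) (Ω : ℕ → ℕ → Set Z) (n m : ℕ)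
    (f : Z → ℝ → ℝ) (b : Z) (t : ℝ) : ℝ :=
  ∑' g : G, ∫ b', Set.indicator (Ω n m) (fun _ => (1 : ℝ)) b * Υ n g b b' *
      f (act g⁻¹ b') (t + Rlog act ν g⁻¹ b') ∂ν

/-- The operator `Y_{n,m}`. -/
noncomputable def Yop {Z : Type*} [MeasurableSpace Z] (act : G → Z → Z) (ν : Measure Z)
    (Υ : ℕ → G → Z → Z → ℝ) (Ω : ℕ → ℕ → Set Z) (n m : ℕ)
    (f : Z → ℝ → ℝ) (b : Z) (t : ℝ) : ℝ :=
  ∑' g : G, ∫ b', Set.indicator (Ω n m) (fun _ => (1 : ℝ)) b * Υ n g b b' *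
      f (act g⁻¹ b) (t + Rlog act ν g⁻¹ b') ∂ν

/-- The operator `L_{n,m}`. -/
noncomputable def Lop {Z : Type*} [MeasurableSpace Z] (act : G → Z → Z) (ν : Measure Z)
    (Υ : ℕ → G → Z → Z → ℝ) (Ω : ℕ → ℕ → Set Z) (n m : ℕ)
    (f : Z → ℝ → ℝ) (b : Z) (t : ℝ) : ℝ :=
  ∑' g : G, ∫ b', Set.indicator (Ω n m) (fun _ => (1 : ℝ)) b * Υ n g b b' *
      f b (t + Rlog act ν g⁻¹ b' - Rlog act ν g⁻¹ b) ∂ν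


section Aux18

lemma measurable_Rlog {G : Type*} [Group G] {Z : Type*} [MeasurableSpace Z]
    (act : G → Z → Z) (ν : Measure Z) (g : G) : Measurable (Rlog act ν g) :=
  Real.measurable_log.comp (Measure.measurable_rnDeriv _ _).ennreal_toReal

lemma prod_withDensity_fst {X K : Type*} [MeasurableSpace X] [MeasurableSpace K]
    (ν : Measure X) [IsProbabilityMeasure ν] (κ : Measure K) [IsProbabilityMeasure κ]
    (μ₁ : Measure X) [IsProbabilityMeasure μ₁] (hac : μ₁ ≪ ν) :
    μ₁.prod κ = (ν.prod κ).withDensity (fun p => μ₁.rnDeriv ν p.1) := by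
  have hw : Measurable (μ₁.rnDeriv ν) := Measure.measurable_rnDeriv _ _
  refine Measure.prod_eq fun s t hs ht => ?_
  rw [withDensity_apply _ (hs.prod ht), ← Measure.prod_restrict,
    lintegral_prod (fun p : X × K => μ₁.rnDeriv ν p.1) (hw.comp measurable_fst).aemeasurable]
  simp only [lintegral_const, Measure.restrict_apply_univ]
  rw [lintegral_mul_const _ hw, Measure.setLIntegral_rnDeriv hac]

lemma ball_pos {K : Type*} [MetricSpace K] [CompactSpace K] [MeasurableSpace K]
    (κ : Measure K) [IsProbabilityMeasure κ]
    (hball : ∀ ε : ℝ, 0 < ε → ∀ x y : K, κ (Metric.closedBall x ε) ≤ 3 * κ (Metric.closedBall y ε))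
    {r : ℝ} (hr : 0 < r) (x : K) : κ (Metric.closedBall x r) ≠ 0 := by
  intro h0
  have hall : ∀ y : K, κ (Metric.closedBall y r) = 0 := fun y =>
    le_antisymm (by simpa [h0] using hball r hr y x) zero_le
  obtain ⟨s, hs⟩ := isCompact_univ.elim_finite_subcover (fun y : K => Metric.ball y r)
    (fun y => isOpen_ball) (fun z _ => mem_iUnion.2 ⟨z, mem_ball_self hr⟩)
  have h1 : κ (Set.univ : Set K) ≤ ∑ y ∈ s, κ (Metric.ball y r) :=
    (measure_mono hs).trans (measure_biUnion_finset_le s _)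
  have h2 : ∀ y : K, κ (Metric.ball y r) = 0 := fun y =>
    le_antisymm ((measure_mono Metric.ball_subset_closedBall).trans (hall y).le) zero_le
  simp [h2, measure_univ] at h1

lemma Rlog_prod_ae {G : Type*} [Group G] {X K : Type*} [MeasurableSpace X] [MeasurableSpace K]
    (act : G → X → X) (hact_meas : ∀ g : G, Measurable (act g))
    (ν : Measure X) [IsProbabilityMeasure ν]
    (hqi : ∀ g : G, ν.map (act g) ≪ ν)
    (κ : Measure K) [IsProbabilityMeasure κ]
    (aK : G → K → K) (haK_meas : ∀ g : G, Measurable (aK g))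
    (haK_pres : ∀ g : G, κ.map (aK g) = κ) (g : G) :
    (fun p : X × K => Rlog (fun g (p : X × K) => (act g p.1, aK g p.2)) (ν.prod κ) g p)
      =ᵐ[ν.prod κ] fun p => Rlog act ν g p.1 := by
  haveI : IsProbabilityMeasure (ν.map (act g⁻¹)) :=
    Measure.isProbabilityMeasure_map (hact_meas g⁻¹).aemeasurable
  have hmap : (ν.prod κ).map (fun p : X × K => (act g⁻¹ p.1, aK g⁻¹ p.2))
      = (ν.map (act g⁻¹)).prod κ := by
    have h := Measure.map_prod_map ν κ (hact_meas g⁻¹) (haK_meas g⁻¹)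
    rw [haK_pres g⁻¹] at h
    exact h.symm
  have h1 : ((ν.prod κ).map (fun p : X × K => (act g⁻¹ p.1, aK g⁻¹ p.2))).rnDeriv (ν.prod κ)
      =ᵐ[ν.prod κ] fun p => (ν.map (act g⁻¹)).rnDeriv ν p.1 := by
    rw [hmap, prod_withDensity_fst ν κ _ (hqi g⁻¹)]
    exact Measure.rnDeriv_withDensity _ ((Measure.measurable_rnDeriv _ _).comp measurable_fst)
  filter_upwards [h1] with p hp
  simp only [Rlog, RN, hp]

end Aux18

set_option maxHeartbeats 1000000 in
theorem stmt18 {G X : Type*} [Group G] [Countable G]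
    [MetricSpace X] [CompactSpace X] [MeasurableSpace X] [BorelSpace X]
    (act : G → X → X) (hact_one : act 1 = id)
    (hact_mul : ∀ g h : G, act (g * h) = act g ∘ act h)
    (hact_meas : ∀ g : G, Measurable (act g))
    (ν : Measure X) [IsProbabilityMeasure ν]
    (hqi : ∀ g : G, ν.map (act g) ≪ ν ∧ ν ≪ ν.map (act g))
    (Υ : ℕ → G → X → X → ℝ) (Ω : ℕ → ℕ → Set X)
    (D C : ℕ → ℝ) (N : ℕ → ℕ) (fbd : ℕ → ℕ → ℝ)
    (hadm : IsRelAdmissible act (fun a b : X => dist a b) ν Υ Ω D C N fbd)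
    {K : Type*} [MetricSpace K] [CompactSpace K] [MeasurableSpace K] [BorelSpace K]
    (κ : Measure K) [IsProbabilityMeasure κ]
    (aK : G → K → K) (haK_one : aK 1 = id)
    (haK_mul : ∀ g h : G, aK (g * h) = aK g ∘ aK h)
    (haK_cont : ∀ g : G, Continuous (aK g))
    (haK_meas : ∀ g : G, Measurable (aK g))
    (haK_pres : ∀ g : G, κ.map (aK g) = κ)
    (hball : ∀ ε : ℝ, 0 < ε → ∀ x y : K,
      κ (Metric.closedBall x ε) ≤ 3 * κ (Metric.closedBall y ε))
    (ρ : ℕ → G → ℝ)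
    (hρ : ∀ (n : ℕ) (g : G), 0 < ρ n g ∧ ρ n g < 1 / (n + 1) ∧
      ∀ x y : K, dist x y ≤ ρ n g → dist (aK g⁻¹ x) (aK g⁻¹ y) ≤ 1 / (n + 1)) :
    ∀ (n m : ℕ) (E : Set ℝ), MeasurableSet E →
      zeta (fun g (p : X × K) => (act g p.1, aK g p.2)) (ν.prod κ)
          (fun (n : ℕ) (g : G) (p q : X × K) =>
      (Set.indicator (Metric.closedBall p.2 (ρ n g)) (fun _ => (1 : ℝ)) q.2 * Υ n g p.1 q.1)
        / (κ (Metric.closedBall p.2 (ρ n g))).toReal)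
          (fun n m => Ω n m ×ˢ (Set.univ : Set K)) n m E
        = zeta act ν Υ Ω n m E := by
  intro n m E hE
  have hΩ : MeasurableSet (Ω n m) := (hadm.closed_Ω n m).measurableSet
  simp only [zeta]
  rw [Measure.sum_apply _ hE, Measure.sum_apply _ hE]
  refine tsum_congr fun g => ?_
  -- notation
  set μ : Measure (X × K) := ν.prod κ with hμdef
  set act' : G → X × K → X × K := fun g p => (act g p.1, aK g p.2) with hact'
  set r : ℝ := ρ n g with hrdef
  have hr0 : 0 < r := (hρ n g).1
  have hc0 : ∀ k : K, κ (Metric.closedBall k r) ≠ 0 := ball_pos κ hball hr0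
  have hcT : ∀ k : K, κ (Metric.closedBall k r) ≠ ⊤ := fun k => measure_ne_top κ _
  set Rg : X → ℝ := Rlog act ν g⁻¹ with hRg
  have hRgm : Measurable Rg := measurable_Rlog act ν g⁻¹
  have hRg'm : Measurable (Rlog act' μ g⁻¹) := measurable_Rlog act' μ g⁻¹
  set φ : X → X → ℝ≥0∞ := fun b b' =>
    E.indicator (fun _ => (1 : ℝ≥0∞)) (Rg b' - Rg b) *
      (Set.indicator (Ω n m) (fun _ => (1 : ℝ≥0∞)) b * ENNReal.ofReal (Υ n g b b')) with hφ
  have hφm : Measurable (fun p : X × X => φ p.1 p.2) := by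
    apply Measurable.mul
    · exact (measurable_const.indicator hE).comp
        ((hRgm.comp measurable_snd).sub (hRgm.comp measurable_fst))
    · exact ((measurable_const.indicator hΩ).comp measurable_fst).mul
        (hadm.meas_Υ n g).ennreal_ofReal
  have hFm : Measurable fun p : X × X => Rlog act ν g⁻¹ p.2 - Rlog act ν g⁻¹ p.1 :=
    (hRgm.comp measurable_snd).sub (hRgm.comp measurable_fst)
  have hF'm : Measurable fun q : (X × K) × (X × K) =>
      Rlog act' μ g⁻¹ q.2 - Rlog act' μ g⁻¹ q.1 :=
    (hRg'm.comp measurable_snd).sub (hRg'm.comp measurable_fst)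
  -- measurability of the ball indicator and of the ball-measure function
  have hSball : MeasurableSet {q : (X × K) × (X × K) | dist q.2.2 q.1.2 ≤ r} :=
    (isClosed_le ((continuous_snd.snd).dist (continuous_fst.snd)) continuous_const).measurableSet
  have hballind : Measurable fun q : (X × K) × (X × K) =>
      Set.indicator (Metric.closedBall q.1.2 r) (fun _ => (1 : ℝ)) q.2.2 := by
    have : (fun q : (X × K) × (X × K) =>
        Set.indicator (Metric.closedBall q.1.2 r) (fun _ => (1 : ℝ)) q.2.2)
        = Set.indicator {q : (X × K) × (X × K) | dist q.2.2 q.1.2 ≤ r} (fun _ => (1 : ℝ)) := by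
      funext q
      by_cases hk : dist q.2.2 q.1.2 ≤ r
      · rw [Set.indicator_of_mem (Metric.mem_closedBall.mpr hk),
          Set.indicator_of_mem
            (show q ∈ {q : (X × K) × (X × K) | dist q.2.2 q.1.2 ≤ r} from hk)]
      · rw [Set.indicator_of_notMem (fun hc => hk (Metric.mem_closedBall.mp hc)),
          Set.indicator_of_notMem
            (show q ∉ {q : (X × K) × (X × K) | dist q.2.2 q.1.2 ≤ r} from hk)]
    rw [this]
    exact measurable_const.indicator hSball
  have hballindE : Measurable fun q : (X × K) × (X × K) =>
      Set.indicator (Metric.closedBall q.1.2 r) (fun _ => (1 : ℝ≥0∞)) q.2.2 := by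
    have : (fun q : (X × K) × (X × K) =>
        Set.indicator (Metric.closedBall q.1.2 r) (fun _ => (1 : ℝ≥0∞)) q.2.2)
        = Set.indicator {q : (X × K) × (X × K) | dist q.2.2 q.1.2 ≤ r} (fun _ => (1 : ℝ≥0∞)) := by
      funext q
      by_cases hk : dist q.2.2 q.1.2 ≤ r
      · rw [Set.indicator_of_mem (Metric.mem_closedBall.mpr hk),
          Set.indicator_of_mem
            (show q ∈ {q : (X × K) × (X × K) | dist q.2.2 q.1.2 ≤ r} from hk)]
      · rw [Set.indicator_of_notMem (fun hc => hk (Metric.mem_closedBall.mp hc)),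
          Set.indicator_of_notMem
            (show q ∉ {q : (X × K) × (X × K) | dist q.2.2 q.1.2 ≤ r} from hk)]
    rw [this]
    exact measurable_const.indicator hSball
  have hcm : Measurable fun k : K => κ (Metric.closedBall k r) := by
    have hT : MeasurableSet {p : K × K | dist p.2 p.1 ≤ r} :=
      (isClosed_le (continuous_snd.dist continuous_fst) continuous_const).measurableSet
    have h := measurable_measure_prodMk_left (ν := κ) hT
    have heq : (fun k : K => κ (Prod.mk k ⁻¹' {p : K × K | dist p.2 p.1 ≤ r}))
        = fun k : K => κ (Metric.closedBall k r) := by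
      funext k
      have hpre : Prod.mk k ⁻¹' {p : K × K | dist p.2 p.1 ≤ r} = Metric.closedBall k r := by
        ext k'
        simp [Metric.mem_closedBall]
      rw [hpre]
    rwa [heq] at h
  have hΥm : Measurable fun q : (X × K) × (X × K) => Υ n g q.1.1 q.2.1 :=
    (hadm.meas_Υ n g).comp ((measurable_fst.fst).prodMk (measurable_snd.fst))
  have hw'm : Measurable fun q : (X × K) × (X × K) =>
      Set.indicator (Ω n m ×ˢ (Set.univ : Set K)) (fun _ => (1 : ℝ≥0∞)) q.1 *
        ENNReal.ofReal
          ((Set.indicator (Metric.closedBall q.1.2 r) (fun _ => (1 : ℝ)) q.2.2 *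
              Υ n g q.1.1 q.2.1) / (κ (Metric.closedBall q.1.2 r)).toReal) := by
    refine Measurable.mul ?_ ?_
    · exact (measurable_const.indicator (hΩ.prod MeasurableSet.univ)).comp measurable_fst
    · exact ((hballind.mul hΥm).div
        ((hcm.comp (measurable_fst.snd)).ennreal_toReal)).ennreal_ofReal
  set ψ : (X × K) × (X × K) → ℝ≥0∞ := fun q =>
    φ q.1.1 q.2.1 * (Set.indicator (Metric.closedBall q.1.2 r) (fun _ => (1 : ℝ≥0∞)) q.2.2 *
      (κ (Metric.closedBall q.1.2 r))⁻¹) with hψ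
  have hψm : Measurable ψ := by
    rw [hψ]
    refine Measurable.mul ?_ (hballindE.mul ((hcm.comp measurable_fst.snd).inv))
    exact hφm.comp ((measurable_fst.fst).prodMk (measurable_snd.fst))
  -- a.e. identification of the product Radon-Nikodym log
  have hg : (fun p : X × K => Rlog act' μ g⁻¹ p) =ᵐ[μ] fun p => Rlog act ν g⁻¹ p.1 :=
    Rlog_prod_ae act hact_meas ν (fun h => (hqi h).1) κ aK haK_meas haK_pres g⁻¹
  have hAnull : μ {p : X × K | ¬ Rlog act' μ g⁻¹ p = Rlog act ν g⁻¹ p.1} = 0 := by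
    exact ae_iff.mp hg
  have hfst : ∀ᵐ q : (X × K) × (X × K) ∂(μ.prod μ),
      Rlog act' μ g⁻¹ q.1 = Rlog act ν g⁻¹ q.1.1 := by
    rw [ae_iff]
    refine measure_mono_null
      (t := {p : X × K | ¬ Rlog act' μ g⁻¹ p = Rlog act ν g⁻¹ p.1} ×ˢ
        (Set.univ : Set (X × K))) (fun q hq => Set.mem_prod.mpr ⟨hq, Set.mem_univ _⟩) ?_
    rw [Measure.prod_prod, hAnull, zero_mul]
  have hsnd : ∀ᵐ q : (X × K) × (X × K) ∂(μ.prod μ),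
      Rlog act' μ g⁻¹ q.2 = Rlog act ν g⁻¹ q.2.1 := by
    rw [ae_iff]
    refine measure_mono_null
      (t := (Set.univ : Set (X × K)) ×ˢ
        {p : X × K | ¬ Rlog act' μ g⁻¹ p = Rlog act ν g⁻¹ p.1})
      (fun q hq => Set.mem_prod.mpr ⟨Set.mem_univ _, hq⟩) ?_
    rw [Measure.prod_prod, hAnull, mul_zero]
  -- compute the right-hand side
  have hRHS :
      (((ν.prod ν).withDensity fun p =>
          Set.indicator (Ω n m) (fun _ => (1 : ℝ≥0∞)) p.1 * ENNReal.ofReal (Υ n g p.1 p.2)).map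
        fun p => Rlog act ν g⁻¹ p.2 - Rlog act ν g⁻¹ p.1) E
        = ∫⁻ b, ∫⁻ b', φ b b' ∂ν ∂ν := by
    rw [Measure.map_apply hFm hE, withDensity_apply _ (hFm hE), ← lintegral_indicator (hFm hE)]
    trans ∫⁻ p : X × X, φ p.1 p.2 ∂(ν.prod ν)
    · refine lintegral_congr fun p => ?_
      by_cases h : Rlog act ν g⁻¹ p.2 - Rlog act ν g⁻¹ p.1 ∈ E
      · simp [hφ, hRg, Set.indicator_apply, h]
      · simp [hφ, hRg, Set.indicator_apply, h]
    · exact lintegral_prod _ hφm.aemeasurable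
  rw [hRHS]
  -- compute the left-hand side
  rw [Measure.map_apply hF'm hE, withDensity_apply _ (hF'm hE), ← lintegral_indicator (hF'm hE)]
  have step1 : ∫⁻ q, Set.indicator
      ((fun q : (X × K) × (X × K) => Rlog act' μ g⁻¹ q.2 - Rlog act' μ g⁻¹ q.1) ⁻¹' E)
      (fun q => Set.indicator (Ω n m ×ˢ (Set.univ : Set K)) (fun _ => (1 : ℝ≥0∞)) q.1 *
        ENNReal.ofReal
          ((Set.indicator (Metric.closedBall q.1.2 r) (fun _ => (1 : ℝ)) q.2.2 *
              Υ n g q.1.1 q.2.1) / (κ (Metric.closedBall q.1.2 r)).toReal)) q ∂(μ.prod μ)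
      = ∫⁻ q, ψ q ∂(μ.prod μ) := by
    refine lintegral_congr_ae ?_
    filter_upwards [hfst, hsnd] with q h1 h2
    have hofReal : ENNReal.ofReal
        ((Set.indicator (Metric.closedBall q.1.2 r) (fun _ => (1 : ℝ)) q.2.2 *
            Υ n g q.1.1 q.2.1) / (κ (Metric.closedBall q.1.2 r)).toReal)
        = Set.indicator (Metric.closedBall q.1.2 r) (fun _ => (1 : ℝ≥0∞)) q.2.2 *
          (ENNReal.ofReal (Υ n g q.1.1 q.2.1) * (κ (Metric.closedBall q.1.2 r))⁻¹) := by
      by_cases hk : q.2.2 ∈ Metric.closedBall q.1.2 r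
      · have hcpos : 0 < (κ (Metric.closedBall q.1.2 r)).toReal :=
          ENNReal.toReal_pos (hc0 _) (hcT _)
        rw [Set.indicator_of_mem hk, Set.indicator_of_mem hk, one_mul, one_mul,
          ENNReal.ofReal_div_of_pos hcpos, ENNReal.ofReal_toReal (hcT _), div_eq_mul_inv]
      · simp [Set.indicator_of_notMem hk]
    by_cases h : Rg q.2.1 - Rg q.1.1 ∈ E
    · have hmem : q ∈ (fun q : (X × K) × (X × K) =>
          Rlog act' μ g⁻¹ q.2 - Rlog act' μ g⁻¹ q.1) ⁻¹' E := by
        simp only [Set.mem_preimage, h1, h2]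
        exact h
      rw [Set.indicator_of_mem hmem, hψ, hofReal, hφ]
      simp only [Set.indicator_of_mem h]
      have hΩind : Set.indicator (Ω n m ×ˢ (Set.univ : Set K)) (fun _ => (1 : ℝ≥0∞)) q.1
          = Set.indicator (Ω n m) (fun _ => (1 : ℝ≥0∞)) q.1.1 := by
        by_cases hb : q.1.1 ∈ Ω n m
        · rw [Set.indicator_of_mem (by exact ⟨hb, Set.mem_univ _⟩), Set.indicator_of_mem hb]
        · rw [Set.indicator_of_notMem (fun hc => hb hc.1), Set.indicator_of_notMem hb]
      rw [hΩind]
      ring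
    · have hmem : q ∉ (fun q : (X × K) × (X × K) =>
          Rlog act' μ g⁻¹ q.2 - Rlog act' μ g⁻¹ q.1) ⁻¹' E := by
        simp only [Set.mem_preimage, h1, h2]
        exact h
      rw [Set.indicator_of_notMem hmem]
      simp only [hψ, hφ]
      simp [Set.indicator_of_notMem h]
  rw [step1, lintegral_prod _ hψm.aemeasurable]
  have hinner : ∀ p : X × K, (∫⁻ p', ψ (p, p') ∂μ) = ∫⁻ b', φ p.1 b' ∂ν := by
    intro p
    have hm2 : Measurable fun p' : X × K => ψ (p, p') :=
      hψm.comp (measurable_const.prodMk measurable_id)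
    rw [hμdef, lintegral_prod _ hm2.aemeasurable]
    refine lintegral_congr fun b' => ?_
    have : ∀ k' : K, ψ (p, (b', k'))
        = (φ p.1 b' * (κ (Metric.closedBall p.2 r))⁻¹) *
          Set.indicator (Metric.closedBall p.2 r) (fun _ => (1 : ℝ≥0∞)) k' := by
      intro k'
      simp only [hψ]
      ring
    simp only [this]
    rw [lintegral_const_mul _ (measurable_const.indicator measurableSet_closedBall),
      lintegral_indicator_const measurableSet_closedBall, one_mul, mul_assoc,
      ENNReal.inv_mul_cancel (hc0 _) (hcT _), mul_one]
  simp only [hinner]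
  have hJm : Measurable fun b : X => ∫⁻ b', φ b b' ∂ν :=
    Measurable.lintegral_prod_right hφm
  rw [lintegral_prod (fun z : X × K => ∫⁻ b', φ z.1 b' ∂ν)
    ((hJm.comp measurable_fst)).aemeasurable]
  simp [lintegral_const, measure_univ, mul_one]
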